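/- The equation 2 − 2e^c + c(e^c − 2) = 0 has a unique root c* in (0,∞), and 2.26 < c* < 2.27. Moreover, the function g(c) = c²(e^{−c} − e^{−2c}) is strictly increasing on (0, c*), strictly decreasing on (c*, ∞), and hence attains its maximum over (0,∞) uniquely at c = c*. -/

import Mathlib

open Real

noncomputable def hh (c : ℝ) : ℝ := 2 - 2 * Real.exp c + c * (Real.exp c - 2)

lemma hh_hasDerivAt (c : ℝ) : HasDerivAt hh ((c - 1) * Real.exp c - 2) c := by
  have h1 : HasDerivAt (fun c : ℝ => 2 - 2 * Real.exp c + c * (Real.exp c - 2))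
      (0 - 2 * Real.exp c + (1 * (Real.exp c - 2) + c * Real.exp c)) c :=
    ((hasDerivAt_const c (2:ℝ)).sub ((Real.hasDerivAt_exp c).const_mul 2)).add
      ((hasDerivAt_id c).mul ((Real.hasDerivAt_exp c).sub_const 2))
  convert h1 using 1
  · rfl
  · ring

lemma hh_deriv : deriv hh = fun c => (c - 1) * Real.exp c - 2 :=
  funext fun c => (hh_hasDerivAt c).deriv

lemma hh_deriv2 (c : ℝ) : deriv (deriv hh) c = c * Real.exp c := by
  rw [hh_deriv]
  have h1 : HasDerivAt (fun c : ℝ => (c - 1) * Real.exp c - 2)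
      (1 * Real.exp c + (c - 1) * Real.exp c) c :=
    (((hasDerivAt_id c).sub_const 1).mul (Real.hasDerivAt_exp c)).sub_const 2
  rw [h1.deriv]; ring

lemma hh_cont : Continuous hh := by unfold hh; continuity

lemma hh_convex : StrictConvexOn ℝ (Set.Ici 0) hh := by
  apply strictConvexOn_of_deriv2_pos (convex_Ici 0) hh_cont.continuousOn
  intro x hx
  rw [interior_Ici] at hx
  simp only [Function.iterate_succ, Function.iterate_zero, Function.comp, id]
  rw [hh_deriv2]
  exact mul_pos hx (Real.exp_pos x)

lemma exp_piece : Real.exp 0.065 ≤ 0.935⁻¹ := by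
  have h1 := Real.add_one_le_exp (-0.065 : ℝ)
  have h2 : Real.exp 0.065 * Real.exp (-0.065) = 1 := by
    rw [← Real.exp_add]; norm_num
  nlinarith [Real.exp_pos (0.065:ℝ), Real.exp_pos (-0.065:ℝ)]

lemma exp_226_lt : Real.exp 2.26 < 9.6923 := by
  have he : (2.26 : ℝ) = 1 + 1 + (0.065 + 0.065 + (0.065 + 0.065)) := by norm_num
  rw [he, Real.exp_add, Real.exp_add, Real.exp_add, Real.exp_add]
  have h1 : Real.exp 1 < 2.7182818286 := Real.exp_one_lt_d9
  have h2 := exp_piece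
  have p1 := Real.exp_pos (1:ℝ)
  have p2 := Real.exp_pos (0.065:ℝ)
  calc Real.exp 1 * Real.exp 1 * (Real.exp 0.065 * Real.exp 0.065 *
        (Real.exp 0.065 * Real.exp 0.065))
      ≤ 2.7182818286 * 2.7182818286 * (0.935⁻¹ * 0.935⁻¹ * (0.935⁻¹ * 0.935⁻¹)) := by
        gcongr <;> positivity
    _ < 9.6923 := by norm_num

lemma exp_227_gt : 9.41 < Real.exp 2.27 := by
  have he : (2.27 : ℝ) = 1 + 1 + (0.135 + 0.135) := by norm_num
  rw [he, Real.exp_add, Real.exp_add, Real.exp_add]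
  have h1 : 2.7182818283 < Real.exp 1 := Real.exp_one_gt_d9
  have h2 : (1.135 : ℝ) ≤ Real.exp 0.135 := by
    have := Real.add_one_le_exp (0.135 : ℝ); linarith
  calc (9.41:ℝ) < 2.7182818283 * 2.7182818283 * (1.135 * 1.135) := by norm_num
    _ ≤ Real.exp 1 * Real.exp 1 * (Real.exp 0.135 * Real.exp 0.135) := by
        gcongr <;> norm_num

lemma hh_226_neg : hh 2.26 < 0 := by
  have := exp_226_lt; unfold hh; nlinarith

lemma hh_227_pos : 0 < hh 2.27 := by
  have := exp_227_gt; unfold hh; nlinarith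

lemma hh_zero : hh 0 = 0 := by simp [hh]

lemma hh_neg_of_lt {cs c : ℝ} (hroot : hh cs = 0) (hc0 : 0 < c) (hccs : c < cs) :
    hh c < 0 := by
  have hcspos : 0 < cs := hc0.trans hccs
  have hb : 0 < c / cs := div_pos hc0 hcspos
  have hb1 : c / cs < 1 := (div_lt_one hcspos).2 hccs
  have key := hh_convex.2 (Set.mem_Ici.2 le_rfl) (Set.mem_Ici.2 hcspos.le)
    (by exact fun h => absurd h.symm hcspos.ne') (by linarith : (0:ℝ) < 1 - c / cs)
    hb (by ring)
  rw [smul_eq_mul, smul_eq_mul, smul_eq_mul, smul_eq_mul, mul_zero, zero_add,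
    div_mul_cancel₀ _ hcspos.ne', hh_zero, mul_zero, hroot, mul_zero, zero_add] at key
  exact key

lemma hh_pos_of_gt {cs c : ℝ} (hcspos : 0 < cs) (hroot : hh cs = 0) (hccs : cs < c) :
    0 < hh c := by
  have hcpos : 0 < c := hcspos.trans hccs
  have hb : 0 < cs / c := div_pos hcspos hcpos
  have hb1 : cs / c < 1 := (div_lt_one hcpos).2 hccs
  have key := hh_convex.2 (Set.mem_Ici.2 le_rfl) (Set.mem_Ici.2 hcpos.le)
    (fun h => absurd h.symm hcpos.ne') (by linarith : (0:ℝ) < 1 - cs / c)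
    hb (by ring)
  rw [smul_eq_mul, smul_eq_mul, smul_eq_mul, smul_eq_mul, mul_zero, zero_add,
    div_mul_cancel₀ _ hcpos.ne', hh_zero, mul_zero, zero_add, hroot] at key
  have hmul : 0 < cs / c * hh c := by linarith
  by_contra hcon
  push_neg at hcon
  nlinarith [mul_nonpos_of_nonneg_of_nonpos hb.le hcon]

-- the function g
noncomputable def gg (c : ℝ) : ℝ := c ^ 2 * (Real.exp (-c) - Real.exp (-(2 * c)))

lemma gg_hasDerivAt (c : ℝ) :
    HasDerivAt gg (c * Real.exp (-(2 * c)) * (-(hh c))) c := by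
  have h1 : HasDerivAt (fun c : ℝ => c ^ 2) (2 * c) c := by
    simpa using hasDerivAt_pow 2 c
  have h2 : HasDerivAt (fun c : ℝ => Real.exp (-c)) (Real.exp (-c) * (-1)) c :=
    (hasDerivAt_id c).neg.exp
  have h3 : HasDerivAt (fun c : ℝ => Real.exp (-(2 * c))) (Real.exp (-(2 * c)) * (-2)) c := by
    have : HasDerivAt (fun c : ℝ => -(2 * c)) (-2) c := by
      exact ((hasDerivAt_id c).const_mul 2).neg.congr_deriv (by norm_num)
    exact this.exp
  have h4 := h1.mul (h2.sub h3)
  refine h4.congr_deriv ?_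
  simp only [Pi.sub_apply]
  have hE : Real.exp (-c) = Real.exp c * Real.exp (-(2 * c)) := by
    rw [← Real.exp_add]; ring_nf
  unfold hh
  rw [hE]; ring

lemma gg_deriv_eq (c : ℝ) : deriv gg c = c * Real.exp (-(2 * c)) * (-(hh c)) :=
  (gg_hasDerivAt c).deriv

lemma gg_cont : Continuous gg := by unfold gg; continuity

lemma gg_mono {cs : ℝ} (hcspos : 0 < cs) (hroot : hh cs = 0) :
    StrictMonoOn gg (Set.Icc 0 cs) := by
  apply strictMonoOn_of_deriv_pos (convex_Icc 0 cs) gg_cont.continuousOn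
  intro x hx
  rw [interior_Icc] at hx
  rw [gg_deriv_eq]
  have hneg := hh_neg_of_lt hroot hx.1 hx.2
  exact mul_pos (mul_pos hx.1 (Real.exp_pos _)) (neg_pos.2 hneg)

lemma gg_anti {cs : ℝ} (hcspos : 0 < cs) (hroot : hh cs = 0) :
    StrictAntiOn gg (Set.Ici cs) := by
  apply strictAntiOn_of_deriv_neg (convex_Ici cs) gg_cont.continuousOn
  intro x hx
  rw [interior_Ici] at hx
  rw [gg_deriv_eq]
  have hpos := hh_pos_of_gt hcspos hroot hx
  have hxpos : 0 < x := hcspos.trans hx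
  exact mul_neg_of_pos_of_neg (mul_pos hxpos (Real.exp_pos _)) (by linarith)

theorem critical_constant_exists_unique :
    ∃ cs : ℝ, 0 < cs ∧ 2 - 2 * Real.exp cs + cs * (Real.exp cs - 2) = 0 ∧
      (∀ c : ℝ, 0 < c → 2 - 2 * Real.exp c + c * (Real.exp c - 2) = 0 → c = cs) ∧
      2.26 < cs ∧ cs < 2.27 ∧
      StrictMonoOn (fun c : ℝ => c ^ 2 * (Real.exp (-c) - Real.exp (-(2 * c))))
        (Set.Ioo 0 cs) ∧
      StrictAntiOn (fun c : ℝ => c ^ 2 * (Real.exp (-c) - Real.exp (-(2 * c))))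
        (Set.Ioi cs) ∧
      (∀ c : ℝ, 0 < c → c ≠ cs →
        c ^ 2 * (Real.exp (-c) - Real.exp (-(2 * c))) <
          cs ^ 2 * (Real.exp (-cs) - Real.exp (-(2 * cs)))) := by
  obtain ⟨cs, hcs, heq⟩ : ∃ cs ∈ Set.Ioo (2.26:ℝ) 2.27, hh cs = 0 := by
    have h := intermediate_value_Ioo (by norm_num : (2.26:ℝ) ≤ 2.27) hh_cont.continuousOn
    obtain ⟨cs, hcs, heq⟩ := h (Set.mem_Ioo.2 ⟨hh_226_neg, hh_227_pos⟩)
    exact ⟨cs, hcs, heq⟩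
  have hcspos : 0 < cs := by have := hcs.1; norm_num at this ⊢; linarith
  have huniq : ∀ c : ℝ, 0 < c → hh c = 0 → c = cs := by
    intro c hc0 hc
    rcases lt_trichotomy c cs with h | h | h
    · exact absurd hc (hh_neg_of_lt heq hc0 h).ne
    · exact h
    · exact absurd hc.symm (hh_pos_of_gt hcspos heq h).ne
  refine ⟨cs, hcspos, heq, huniq, hcs.1, hcs.2, ?_, ?_, ?_⟩
  · exact (gg_mono hcspos heq).mono (fun x hx => ⟨hx.1.le, hx.2.le⟩)
  · exact (gg_anti hcspos heq).mono (fun x hx => Set.mem_Ici.2 (le_of_lt hx))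
  · intro c hc0 hne
    rcases lt_or_gt_of_ne hne with h | h
    · exact gg_mono hcspos heq ⟨hc0.le, h.le⟩ ⟨hcspos.le, le_rfl⟩ h
    · exact gg_anti hcspos heq (Set.mem_Ici.2 le_rfl) (Set.mem_Ici.2 h.le) h
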